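/- In the setting of the previous lemma (orthonormal u₁, u₂, Σ = diag(σ₁,σ₂), 0 < ω < √2 σ₂, α = ω²/(2σ₂²), target M ∈ ℝ^{m×m}): the minimizer over Ṽ ∈ ℝ^{2×m} of the averaged least-squares functional (1/|V_ω|)∫_{V_ω} ‖(u₁ | u₂+Δu₂) Ṽ − M‖²_F dΔu₂ is Ṽ = (u₁ᵀM ; (1−α)u₂ᵀM) (first row u₁ᵀM, second row (1−α)u₂ᵀM). -/

import Mathlib

open Matrix MeasureTheory

noncomputable section

/-- The `m × 2` matrix `(u | v)` with columns `u` and `v`. -/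
def colcat {m : ℕ} (u v : EuclideanSpace ℝ (Fin m)) : Matrix (Fin m) (Fin 2) ℝ :=
  Matrix.of fun i c => if c = 0 then u i else v i

/-- Squared Frobenius norm. -/
def frobSq {a b : Type*} [Fintype a] [Fintype b] (M : Matrix a b ℝ) : ℝ :=
  ∑ i, ∑ j, (M i j) ^ 2

lemma sum_expand_atoms {m : ℕ} (a b c : Fin m → ℝ) (P : Fin m → ℝ)
    (k1 k2 k3 k4 k5 k6 : ℝ)
    (h : ∀ i, P i = k1*(a i*a i) + k2*(a i*b i) + k3*(a i*c i) + k4*(b i*b i)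
        + k5*(b i*c i) + k6*(c i*c i)) :
    ∑ i, P i = k1*(∑ i, a i*a i) + k2*(∑ i, a i*b i) + k3*(∑ i, a i*c i)
        + k4*(∑ i, b i*b i) + k5*(∑ i, b i*c i) + k6*(∑ i, c i*c i) := by
  simp only [Finset.mul_sum, ← Finset.sum_add_distrib]
  exact Finset.sum_congr rfl fun i _ => h i

lemma sum_sq_expand {m : ℕ} (u v Mc : Fin m → ℝ) (s t : ℝ)
    (h1 : ∑ i, u i * u i = 1) (h2 : ∑ i, u i * v i = 0) (h3 : ∑ i, v i * v i = 1) :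
    ∑ i, (u i * s + v i * t - Mc i)^2
      = s^2 + t^2 + (∑ i, (Mc i)^2) - 2*s*(∑ i, u i * Mc i) - 2*t*(∑ i, v i * Mc i) := by
  have key : ∀ i : Fin m, (u i * s + v i * t - Mc i)^2
      = s^2*(u i*u i)+t^2*(v i*v i)+(Mc i)^2+(2*s*t)*(u i*v i)-(2*s)*(u i*Mc i)-(2*t)*(v i*Mc i) :=
    fun i => by ring
  rw [Finset.sum_congr rfl (fun i _ => key i)]
  simp only [Finset.sum_add_distrib, Finset.sum_sub_distrib, ← Finset.mul_sum, h1, h2, h3]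
  ring

lemma colcat_orth_iff {m : ℕ} (u v : EuclideanSpace ℝ (Fin m)) :
    (colcat u v)ᵀ * colcat u v = 1 ↔
      (∑ i, u i * u i = 1 ∧ ∑ i, u i * v i = 0 ∧ ∑ i, v i * v i = 1) := by
  constructor
  · intro hU
    have h00 := congrFun (congrFun hU 0) 0
    have h01 := congrFun (congrFun hU 0) 1
    have h11 := congrFun (congrFun hU 1) 1
    simp [Matrix.mul_apply, colcat, Matrix.one_apply] at h00 h01 h11
    exact ⟨h00, h01, h11⟩
  · rintro ⟨h1, h2, h3⟩
    ext c c'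
    fin_cases c <;> fin_cases c' <;>
      simp [Matrix.mul_apply, colcat, Matrix.one_apply] <;>
      [exact h1; exact h2; (rw [← h2]; exact Finset.sum_congr rfl fun i _ => mul_comm _ _);
        exact h3]

lemma euclidean_norm_eq_sqrt_sum {m : ℕ} (x : EuclideanSpace ℝ (Fin m)) :
    ‖x‖ = Real.sqrt (∑ i, x i * x i) := by
  rw [EuclideanSpace.norm_eq]
  congr 1; exact Finset.sum_congr rfl fun i _ => by rw [Real.norm_eq_abs, sq_abs, sq]

theorem stmt12 (m : ℕ) (hm : 3 ≤ m) (u₁ u₂ : EuclideanSpace ℝ (Fin m))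
    (hU : (colcat u₁ u₂)ᵀ * colcat u₁ u₂ = 1)
    (σ₂ : ℝ) (hσ₂ : 0 < σ₂) (M : Matrix (Fin m) (Fin m) ℝ)
    (ω : ℝ) (hω0 : 0 < ω) (hωlt : ω < Real.sqrt 2 * σ₂) :
    let α : ℝ := ω ^ 2 / (2 * σ₂ ^ 2)
    let Vω : Set (EuclideanSpace ℝ (Fin m)) :=
      {Δ | ‖Δ‖ * σ₂ = ω ∧ (colcat u₁ (u₂ + Δ))ᵀ * colcat u₁ (u₂ + Δ) = 1}
    let F : Matrix (Fin 2) (Fin m) ℝ → ℝ := fun W =>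
      (1 / (μH[(m : ℝ) - 3] Vω).toReal) *
        ∫ Δ in Vω, frobSq (colcat u₁ (u₂ + Δ) * W - M) ∂(μH[(m : ℝ) - 3])
    ∀ W : Matrix (Fin 2) (Fin m) ℝ,
      F (Matrix.of fun c j => if c = 0 then ∑ i, u₁ i * M i j
          else (1 - α) * ∑ i, u₂ i * M i j) ≤ F W := by
  intro α Vω F W
  have hα : α = ω ^ 2 / (2 * σ₂ ^ 2) := rfl
  have hα0 : 0 ≤ α := by rw [hα]; positivity
  obtain ⟨hu11, hu12, hu22⟩ := (colcat_orth_iff u₁ u₂).1 hU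
  -- abbreviations
  obtain ⟨p, hp⟩ : ∃ p : Fin m → ℝ, ∀ j, p j = ∑ i, u₁ i * M i j := ⟨_, fun _ => rfl⟩
  obtain ⟨q, hq⟩ : ∃ q : Fin m → ℝ, ∀ j, q j = ∑ i, u₂ i * M i j := ⟨_, fun _ => rfl⟩
  obtain ⟨r, hr⟩ : ∃ r : EuclideanSpace ℝ (Fin m) → Fin m → ℝ,
      ∀ Δ j, r Δ j = ∑ i, (Δ i + α * u₂ i) * M i j := ⟨_, fun _ _ => rfl⟩
  obtain ⟨L, hL⟩ : ∃ L : EuclideanSpace ℝ (Fin m) → ℝ,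
      ∀ Δ, L Δ = ∑ j, (W 1 j - (1-α) * q j) * r Δ j := ⟨_, fun _ => rfl⟩
  set Q : ℝ := ∑ j, ((W 0 j - p j)^2 + (W 1 j - (1-α) * q j)^2) with hQ
  have hQ0 : 0 ≤ Q := Finset.sum_nonneg fun j _ => by positivity
  set Wopt : Matrix (Fin 2) (Fin m) ℝ :=
    Matrix.of fun c j => if c = 0 then ∑ i, u₁ i * M i j
      else (1 - α) * ∑ i, u₂ i * M i j with hWopt
  have hWopt0 : ∀ j, Wopt 0 j = p j := fun j => by simp [hWopt, hp]
  have hWopt1 : ∀ j, Wopt 1 j = (1-α) * q j := fun j => by simp [hWopt, hq]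
  -- facts about members of Vω
  have hfacts : ∀ Δ ∈ Vω, (∑ i, u₁ i * Δ i = 0) ∧ (∑ i, u₂ i * Δ i = -α) ∧
      (∑ i, Δ i * Δ i = 2*α) ∧ (∑ i, (u₂ i + Δ i) * (u₂ i + Δ i) = 1) ∧
      (∑ i, u₁ i * (u₂ i + Δ i) = 0) := by
    intro Δ hΔ
    obtain ⟨hn, hmat⟩ := hΔ
    obtain ⟨-, h2, h3⟩ := (colcat_orth_iff u₁ (u₂ + Δ)).1 hmat
    have hadd : ∀ i, (u₂ + Δ) i = u₂ i + Δ i := fun i => rfl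
    simp only [hadd] at h2 h3
    have hΔn : ∑ i, Δ i * Δ i = 2*α := by
      have h1 : ‖Δ‖ = ω / σ₂ := (eq_div_iff hσ₂.ne').2 hn
      have h4 : ∑ i, Δ i * Δ i = (ω/σ₂)^2 := by
        have h5 : Real.sqrt (∑ i, Δ i * Δ i) = ω/σ₂ := by
          rw [← euclidean_norm_eq_sqrt_sum, h1]
        rw [← h5, Real.sq_sqrt (Finset.sum_nonneg fun i _ => mul_self_nonneg _)]
      rw [h4, hα]; field_simp
    have e3 := sum_expand_atoms u₁ u₂ Δ (fun i => (u₂ i + Δ i) * (u₂ i + Δ i))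
      0 0 0 1 2 1 (fun i => by ring)
    rw [h3, hu11, hu12, hΔn, hu22] at e3
    have e2 := sum_expand_atoms u₁ u₂ Δ (fun i => u₁ i * (u₂ i + Δ i))
      0 1 1 0 0 0 (fun i => by ring)
    rw [h2, hu11, hu12, hu22] at e2
    exact ⟨by linarith, by linarith, hΔn, h3, h2⟩
  -- the integrand formula on Vω
  have hform : ∀ (W' : Matrix (Fin 2) (Fin m) ℝ) (Δ), Δ ∈ Vω →
      frobSq (colcat u₁ (u₂ + Δ) * W' - M)
        = ∑ j, ((W' 0 j)^2 + (W' 1 j)^2 + (∑ i, (M i j)^2)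
            - 2*(W' 0 j)*(p j) - 2*(W' 1 j)*((1-α)*(q j) + r Δ j)) := by
    intro W' Δ hΔ
    obtain ⟨f1, f2, f3, f4, f5⟩ := hfacts Δ hΔ
    have hentry : frobSq (colcat u₁ (u₂ + Δ) * W' - M)
        = ∑ j, ∑ i, (u₁ i * W' 0 j + (u₂ i + Δ i) * W' 1 j - M i j)^2 := by
      rw [frobSq, Finset.sum_comm]
      refine Finset.sum_congr rfl fun j _ => Finset.sum_congr rfl fun i _ => ?_
      congr 1
      simp [Matrix.sub_apply, Matrix.mul_apply, colcat, Fin.sum_univ_two]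
    rw [hentry]
    refine Finset.sum_congr rfl fun j _ => ?_
    rw [sum_sq_expand u₁ (fun i => u₂ i + Δ i) (fun i => M i j) (W' 0 j) (W' 1 j) hu11 f5 f4]
    have hvM : ∑ i, (u₂ i + Δ i) * M i j = (1-α)*(q j) + r Δ j := by
      rw [hq, hr, Finset.mul_sum, ← Finset.sum_add_distrib]
      exact Finset.sum_congr rfl fun i _ => by ring
    rw [hvM, hp]
  -- difference formula on Vω
  have hdiff : ∀ Δ ∈ Vω, frobSq (colcat u₁ (u₂ + Δ) * W - M)
      = frobSq (colcat u₁ (u₂ + Δ) * Wopt - M) + (Q - 2 * L Δ) := by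
    intro Δ hΔ
    rw [hform W Δ hΔ, hform Wopt Δ hΔ]
    simp only [hWopt0, hWopt1]
    rw [hQ, hL, Finset.mul_sum, ← Finset.sum_sub_distrib, ← Finset.sum_add_distrib]
    exact Finset.sum_congr rfl fun j _ => by ring

  -- the point reflection
  set c : EuclideanSpace ℝ (Fin m) := (-(2*α)) • u₂ with hc
  set e := IsometryEquiv.subLeft c with he
  have heap : ∀ (x : EuclideanSpace ℝ (Fin m)) i, e x i = -(2*α) * u₂ i - x i := by
    intro x i; rfl
  have hee : ∀ x, e (e x) = x := by
    intro x; exact sub_sub_cancel c x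
  have hmape : ∀ Δ ∈ Vω, e Δ ∈ Vω := by
    intro Δ hΔ
    obtain ⟨f1, f2, f3, f4, f5⟩ := hfacts Δ hΔ
    obtain ⟨hn, -⟩ := hΔ
    refine ⟨?_, ?_⟩
    · have hsum : ∑ i, e Δ i * e Δ i = ∑ i, Δ i * Δ i := by
        have h := sum_expand_atoms u₁ u₂ Δ (fun i => e Δ i * e Δ i)
          0 0 0 (4*α^2) (4*α) 1 (fun i => by simp only [heap]; ring)
        rw [h, hu11, hu12, hu22, f2, f3]; ring
      have hnorm : ‖e Δ‖ = ‖Δ‖ := by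
        rw [euclidean_norm_eq_sqrt_sum, euclidean_norm_eq_sqrt_sum, hsum]
      rw [hnorm]; exact hn
    · apply (colcat_orth_iff u₁ (u₂ + e Δ)).2
      have hadd : ∀ i, (u₂ + e Δ) i = u₂ i + e Δ i := fun i => rfl
      refine ⟨hu11, ?_, ?_⟩
      · simp only [hadd]
        have h := sum_expand_atoms u₁ u₂ Δ (fun i => u₁ i * (u₂ i + e Δ i))
          0 (1-2*α) (-1) 0 0 0 (fun i => by simp only [heap]; ring)
        rw [h, hu11, hu12, hu22, f1]; ring
      · simp only [hadd]
        have h := sum_expand_atoms u₁ u₂ Δ (fun i => (u₂ i + e Δ i) * (u₂ i + e Δ i))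
          0 0 0 ((1-2*α)^2) (-2*(1-2*α)) 1 (fun i => by simp only [heap]; ring)
        rw [h, hu11, hu12, hu22, f2, f3]; ring
  have hpre : e ⁻¹' Vω = Vω := by
    ext x; constructor
    · intro hx
      have h := hmape _ hx
      rwa [hee] at h
    · exact fun hx => hmape x hx
  -- topology and measurability
  have hcolc : ∀ (i : Fin m) (cc : Fin 2),
      Continuous fun Δ : EuclideanSpace ℝ (Fin m) => colcat u₁ (u₂ + Δ) i cc := by
    intro i cc
    have h : (fun Δ : EuclideanSpace ℝ (Fin m) => colcat u₁ (u₂ + Δ) i cc)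
        = fun Δ => if cc = 0 then u₁ i else u₂ i + Δ i := rfl
    rw [h]; split_ifs
    exacts [continuous_const, continuous_const.add (PiLp.continuous_apply 2 _ i)]
  have hVclosed : IsClosed Vω := by
    have h1 : IsClosed {Δ : EuclideanSpace ℝ (Fin m) | ‖Δ‖ * σ₂ = ω} :=
      isClosed_eq (continuous_norm.mul continuous_const) continuous_const
    have h2 : IsClosed {Δ : EuclideanSpace ℝ (Fin m) |
        (colcat u₁ (u₂ + Δ))ᵀ * colcat u₁ (u₂ + Δ) = 1} := by
      apply isClosed_eq _ continuous_const
      apply continuous_matrix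
      intro cc cc'
      have h : (fun Δ : EuclideanSpace ℝ (Fin m) =>
            ((colcat u₁ (u₂ + Δ))ᵀ * colcat u₁ (u₂ + Δ)) cc cc')
          = fun Δ => ∑ i, colcat u₁ (u₂ + Δ) i cc * colcat u₁ (u₂ + Δ) i cc' := by
        funext Δ; simp [Matrix.mul_apply]
      rw [h]
      exact continuous_finset_sum _ fun i _ => (hcolc i cc).mul (hcolc i cc')
    exact h1.inter h2
  have hVm : MeasurableSet Vω := hVclosed.measurableSet
  have hGcont : ∀ (W' : Matrix (Fin 2) (Fin m) ℝ), Continuous fun Δ : EuclideanSpace ℝ (Fin m) =>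
      frobSq (colcat u₁ (u₂ + Δ) * W' - M) := by
    intro W'
    have h : (fun Δ : EuclideanSpace ℝ (Fin m) => frobSq (colcat u₁ (u₂ + Δ) * W' - M))
        = fun Δ => ∑ i, ∑ j, ((∑ cc, colcat u₁ (u₂ + Δ) i cc * W' cc j) - M i j)^2 := by
      funext Δ; rw [frobSq]
      exact Finset.sum_congr rfl fun i _ => Finset.sum_congr rfl fun j _ => by
        simp [Matrix.sub_apply, Matrix.mul_apply]
    rw [h]
    exact continuous_finset_sum _ fun i _ => continuous_finset_sum _ fun j _ =>
      ((continuous_finset_sum _ fun cc _ => (hcolc i cc).mul continuous_const).sub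
        continuous_const).pow 2
  have hLcont : Continuous L := by
    have h : L = fun Δ => ∑ j, (W 1 j - (1-α) * q j) * (∑ i, (Δ i + α * u₂ i) * M i j) := by
      funext Δ; rw [hL]
      exact Finset.sum_congr rfl fun j _ => by rw [hr]
    rw [h]
    exact continuous_finset_sum _ fun j _ => continuous_const.mul
      (continuous_finset_sum _ fun i _ =>
        (((PiLp.continuous_apply 2 _ i).add continuous_const).mul continuous_const))
  -- absolute-value bounds on Vω
  have habs : ∀ (x : Fin m → ℝ), (∑ i, x i * x i = 1) → ∀ i, |x i| ≤ 1 := by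
    intro x hx i
    have h1 : x i * x i ≤ 1 := by
      rw [← hx]
      exact Finset.single_le_sum (fun j _ => mul_self_nonneg (x j)) (Finset.mem_univ i)
    nlinarith [abs_nonneg (x i), abs_mul_abs_self (x i)]
  have hGbdd : ∀ (W' : Matrix (Fin 2) (Fin m) ℝ), ∀ Δ ∈ Vω,
      |frobSq (colcat u₁ (u₂ + Δ) * W' - M)|
        ≤ ∑ i, ∑ j, (|W' 0 j| + |W' 1 j| + |M i j|)^2 := by
    intro W' Δ hΔ
    obtain ⟨f1, f2, f3, f4, f5⟩ := hfacts Δ hΔ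
    have hv : ∀ i, |u₂ i + Δ i| ≤ 1 := habs (fun i => u₂ i + Δ i) f4
    have hu : ∀ i, |u₁ i| ≤ 1 := habs (fun i => u₁ i) hu11
    have hnn : 0 ≤ frobSq (colcat u₁ (u₂ + Δ) * W' - M) :=
      Finset.sum_nonneg fun i _ => Finset.sum_nonneg fun j _ => sq_nonneg _
    rw [abs_of_nonneg hnn, frobSq]
    refine Finset.sum_le_sum fun i _ => Finset.sum_le_sum fun j _ => ?_
    have hentry : (colcat u₁ (u₂ + Δ) * W' - M) i j
        = u₁ i * W' 0 j + (u₂ i + Δ i) * W' 1 j - M i j := by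
      simp [Matrix.sub_apply, Matrix.mul_apply, colcat, Fin.sum_univ_two]
    rw [hentry]
    have hb : |u₁ i * W' 0 j + (u₂ i + Δ i) * W' 1 j - M i j|
        ≤ |W' 0 j| + |W' 1 j| + |M i j| := by
      rw [sub_eq_add_neg]
      refine (abs_add_three _ _ _).trans ?_
      rw [abs_neg, abs_mul, abs_mul]
      have g1 : |u₁ i| * |W' 0 j| ≤ 1 * |W' 0 j| :=
        mul_le_mul_of_nonneg_right (hu i) (abs_nonneg _)
      have g2 : |u₂ i + Δ i| * |W' 1 j| ≤ 1 * |W' 1 j| :=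
        mul_le_mul_of_nonneg_right (hv i) (abs_nonneg _)
      rw [one_mul] at g1 g2
      linarith
    exact sq_le_sq' (by linarith [neg_abs_le (u₁ i * W' 0 j + (u₂ i + Δ i) * W' 1 j - M i j)])
      (by linarith [le_abs_self (u₁ i * W' 0 j + (u₂ i + Δ i) * W' 1 j - M i j)])
  have hLbdd : ∀ Δ ∈ Vω,
      |L Δ| ≤ ∑ j, |W 1 j - (1-α) * q j| * ((2+α) * ∑ i, |M i j|) := by
    intro Δ hΔ
    obtain ⟨f1, f2, f3, f4, f5⟩ := hfacts Δ hΔ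
    have hv : ∀ i, |u₂ i + Δ i| ≤ 1 := habs (fun i => u₂ i + Δ i) f4
    have hu2 : ∀ i, |u₂ i| ≤ 1 := habs (fun i => u₂ i) hu22
    rw [hL]
    refine (Finset.abs_sum_le_sum_abs _ _).trans (Finset.sum_le_sum fun j _ => ?_)
    rw [abs_mul]
    refine mul_le_mul_of_nonneg_left ?_ (abs_nonneg _)
    rw [hr]
    refine (Finset.abs_sum_le_sum_abs _ _).trans ?_
    rw [Finset.mul_sum]
    refine Finset.sum_le_sum fun i _ => ?_
    rw [abs_mul]
    refine mul_le_mul_of_nonneg_right ?_ (abs_nonneg _)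
    have hrw : Δ i + α * u₂ i = (u₂ i + Δ i) + (-(u₂ i)) + α * u₂ i := by ring
    rw [hrw]
    refine (abs_add_three _ _ _).trans ?_
    rw [abs_neg, abs_mul, abs_of_nonneg hα0]
    have := mul_le_mul_of_nonneg_left (hu2 i) hα0
    linarith [hv i, hu2 i]
  -- main case split
  show (1 / (μH[(m : ℝ) - 3] Vω).toReal) *
        ∫ Δ in Vω, frobSq (colcat u₁ (u₂ + Δ) * Wopt - M) ∂(μH[(m : ℝ) - 3])
      ≤ (1 / (μH[(m : ℝ) - 3] Vω).toReal) *
        ∫ Δ in Vω, frobSq (colcat u₁ (u₂ + Δ) * W - M) ∂(μH[(m : ℝ) - 3])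
  by_cases hT0 : (μH[(m : ℝ) - 3] Vω).toReal = 0
  · rw [hT0]; simp
  · have hμfin : μH[(m : ℝ) - 3] Vω ≠ ⊤ := by
      intro h; exact hT0 (by rw [h]; simp)
    haveI hfinR : IsFiniteMeasure ((μH[(m : ℝ) - 3] :
        Measure (EuclideanSpace ℝ (Fin m))).restrict Vω) :=
      ⟨by rw [Measure.restrict_apply_univ]; exact lt_top_iff_ne_top.2 hμfin⟩
    have hIntOf : ∀ (f : EuclideanSpace ℝ (Fin m) → ℝ) (C : ℝ), Continuous f →
        (∀ Δ ∈ Vω, |f Δ| ≤ C) → IntegrableOn f Vω (μH[(m : ℝ) - 3]) := by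
      intro f C hf hC
      refine Integrable.mono' (integrable_const C) hf.aestronglyMeasurable ?_
      refine (ae_restrict_iff' hVm).2 (Filter.Eventually.of_forall fun Δ hΔ => ?_)
      simpa [Real.norm_eq_abs] using hC Δ hΔ
    have hIopt : IntegrableOn (fun Δ => frobSq (colcat u₁ (u₂ + Δ) * Wopt - M)) Vω
        (μH[(m : ℝ) - 3]) :=
      hIntOf _ _ (hGcont Wopt) (hGbdd Wopt)
    have hIL : IntegrableOn L Vω (μH[(m : ℝ) - 3]) :=
      hIntOf _ _ hLcont hLbdd
    -- symmetry: the integral of L vanishes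
    have hLe : ∀ x, L (e x) = - L x := by
      intro x
      rw [hL, hL, ← Finset.sum_neg_distrib]
      refine Finset.sum_congr rfl fun j _ => ?_
      have hre : r (e x) j = - r x j := by
        rw [hr, hr, ← Finset.sum_neg_distrib]
        exact Finset.sum_congr rfl fun i _ => by rw [heap]; ring
      rw [hre]; ring
    have hLzero : ∫ Δ in Vω, L Δ ∂(μH[(m : ℝ) - 3]) = 0 := by
      have h1 : ∫ Δ in Vω, L Δ ∂(μH[(m : ℝ) - 3])
          = ∫ Δ in e ⁻¹' Vω, L (e Δ) ∂(μH[(m : ℝ) - 3]) :=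
        ((e.measurePreserving_hausdorffMeasure _).setIntegral_preimage_emb
          e.toHomeomorph.measurableEmbedding L Vω).symm
      rw [hpre] at h1
      have h2 : ∫ Δ in Vω, L (e Δ) ∂(μH[(m : ℝ) - 3])
          = - ∫ Δ in Vω, L Δ ∂(μH[(m : ℝ) - 3]) := by
        simp only [hLe]
        exact integral_neg _
      rw [h2] at h1
      linarith
    -- compute the integral of the W functional
    have hEq : ∫ Δ in Vω, frobSq (colcat u₁ (u₂ + Δ) * W - M) ∂(μH[(m : ℝ) - 3])
        = (∫ Δ in Vω, frobSq (colcat u₁ (u₂ + Δ) * Wopt - M) ∂(μH[(m : ℝ) - 3]))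
          + Q * (μH[(m : ℝ) - 3] Vω).toReal := by
      have hIg : IntegrableOn (fun Δ => Q - 2 * L Δ) Vω (μH[(m : ℝ) - 3]) := by
        exact (integrable_const Q).sub (hIL.const_mul 2)
      have h2 : ∫ Δ in Vω, (Q - 2 * L Δ) ∂(μH[(m : ℝ) - 3]) = Q * (μH[(m : ℝ) - 3] Vω).toReal := by
        rw [integral_sub (integrable_const Q) (hIL.const_mul 2), integral_const_mul, hLzero,
          setIntegral_const, smul_eq_mul, measureReal_def]
        ring
      rw [setIntegral_congr_fun hVm (fun Δ hΔ => hdiff Δ hΔ), integral_add hIopt hIg, h2]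
    rw [hEq]
    have hTpos : 0 < (μH[(m : ℝ) - 3] Vω).toReal :=
      lt_of_le_of_ne ENNReal.toReal_nonneg (Ne.symm hT0)
    have hfin : (1 / (μH[(m : ℝ) - 3] Vω).toReal) *
        ((∫ Δ in Vω, frobSq (colcat u₁ (u₂ + Δ) * Wopt - M) ∂(μH[(m : ℝ) - 3]))
          + Q * (μH[(m : ℝ) - 3] Vω).toReal)
        = (1 / (μH[(m : ℝ) - 3] Vω).toReal) *
          (∫ Δ in Vω, frobSq (colcat u₁ (u₂ + Δ) * Wopt - M) ∂(μH[(m : ℝ) - 3])) + Q := by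
      field_simp
    rw [hfin]
    linarith
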